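/- (Proposition 2, concavity part) The function g is strictly concave on [0,1]; it is differentiable on (0,1) with g'(x) = V̄(y_th(x)) for every x ∈ (0,1); moreover lim_{x→0+} g'(x) = ∞ and lim_{x→1−} g'(x) = 0. -/

import Mathlib

open MeasureTheory Set Filter Topology

lemma tail_split (h : ℝ → ℝ) (hint : IntegrableOn h (Ioi 0)) {s t : ℝ} (hs : 0 ≤ s)
    (hst : s ≤ t) :
    ∫ y in Ioi s, h y = (∫ y in Ioc s t, h y) + ∫ y in Ioi t, h y := by
  rw [← setIntegral_union (Ioc_disjoint_Ioi le_rfl) measurableSet_Ioi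
    (hint.mono_set (fun y hy => lt_of_le_of_lt hs hy.1))
    (hint.mono_set (Ioi_subset_Ioi (hs.trans hst))), Ioc_union_Ioi_eq_Ioi hst]

lemma tail_hasDerivAt (h : ℝ → ℝ) (hcont : ContinuousOn h (Ioi 0))
    (hint : IntegrableOn h (Ioi 0)) {t₀ : ℝ} (ht₀ : 0 < t₀) :
    HasDerivAt (fun t => ∫ y in Ioi t, h y) (-(h t₀)) t₀ := by
  set a := t₀ / 2 with ha_def
  have ha : 0 < a := by positivity
  have ha' : a < t₀ := by rw [ha_def]; linarith
  have hii : IntervalIntegrable h volume a t₀ := by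
    rw [intervalIntegrable_iff_integrableOn_Ioc_of_le ha'.le]
    exact hint.mono_set (fun y hy => lt_trans ha hy.1)
  have hmeas : StronglyMeasurableAtFilter h (𝓝 t₀) := by
    exact ⟨Ioi 0, Ioi_mem_nhds ht₀, (hcont.aestronglyMeasurable measurableSet_Ioi)⟩
  have hc : ContinuousAt h t₀ := hcont.continuousAt (Ioi_mem_nhds ht₀)
  have hd : HasDerivAt (fun t => (∫ y in Ioi a, h y) - ∫ y in a..t, h y) (-(h t₀)) t₀ :=
    (intervalIntegral.integral_hasDerivAt_right hii hmeas hc).const_sub _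
  apply hd.congr_of_eventuallyEq
  filter_upwards [Ioi_mem_nhds ha'] with t ht
  rw [intervalIntegral.integral_of_le (le_of_lt ht), tail_split h hint ha.le (le_of_lt ht)]
  ring

lemma pos_Ioc (h : ℝ → ℝ) (hint : IntegrableOn h (Ioi 0)) (hpos : ∀ y ∈ Ioi (0:ℝ), 0 < h y)
    {s t : ℝ} (hs : 0 ≤ s) (hst : s < t) : 0 < ∫ y in Ioc s t, h y := by
  rw [← intervalIntegral.integral_of_le hst.le]
  refine intervalIntegral.intervalIntegral_pos_of_pos_on ?_ (fun x hx => hpos x (lt_of_le_of_lt hs hx.1)) hst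
  rw [intervalIntegrable_iff_integrableOn_Ioc_of_le hst.le]
  exact hint.mono_set (fun y hy => lt_of_le_of_lt hs hy.1)

lemma tail_nonneg (h : ℝ → ℝ) (hpos : ∀ y ∈ Ioi (0:ℝ), 0 < h y) {t : ℝ} (ht : 0 ≤ t) :
    0 ≤ ∫ y in Ioi t, h y :=
  setIntegral_nonneg measurableSet_Ioi (fun y hy => (hpos y (lt_of_le_of_lt ht hy)).le)

lemma tail_pos (h : ℝ → ℝ) (hcont : ContinuousOn h (Ioi 0)) (hint : IntegrableOn h (Ioi 0))
    (hpos : ∀ y ∈ Ioi (0:ℝ), 0 < h y) {t : ℝ} (ht : 0 ≤ t) : 0 < ∫ y in Ioi t, h y := by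
  rw [tail_split h hint ht (by linarith : t ≤ t + 1)]
  have h1 := pos_Ioc h hint hpos ht (by linarith : t < t + 1)
  have h2 := tail_nonneg h hpos (by linarith : (0:ℝ) ≤ t + 1)
  linarith

lemma tail_strictAnti (h : ℝ → ℝ) (hcont : ContinuousOn h (Ioi 0))
    (hint : IntegrableOn h (Ioi 0)) (hpos : ∀ y ∈ Ioi (0:ℝ), 0 < h y) :
    StrictAntiOn (fun t => ∫ y in Ioi t, h y) (Ici 0) := by
  intro s hs t ht hst
  have := pos_Ioc h hint hpos hs hst
  have hsplit := tail_split h hint hs hst.le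
  simp only
  linarith

/-- Proposition 2 (concavity part): `g` is strictly concave on `[0,1]`, differentiable on
`(0,1)` with `g'(x) = V̄(y_th(x))`, and `g'(x) → ∞` as `x → 0⁺`, `g'(x) → 0` as `x → 1⁻`. -/
theorem g_strictConcave_deriv
    (fY : ℝ → ℝ)
    (hfY_cont : ContinuousOn fY (Ioi 0))
    (hfY_pos : ∀ y ∈ Ioi (0:ℝ), 0 < fY y)
    (hfY_int : IntegrableOn fY (Ioi 0))
    (hfY_one : ∫ y in Ioi (0:ℝ), fY y = 1)
    (V : ℝ → ℝ)
    (hV_cont : ContinuousOn V (Ici 0))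
    (hV_mono : StrictMonoOn V (Ici 0))
    (hV0 : V 0 = 0)
    (hV_top : Tendsto V atTop atTop)
    (hVf_int : IntegrableOn (fun y => V y * fY y) (Ioi 0))
    (yth : ℝ → ℝ)
    (hyth : ∀ x ∈ Ioo (0:ℝ) 1, yth x ∈ Ioi (0:ℝ) ∧ ∫ y in Ioi (yth x), fY y = x)
    (g : ℝ → ℝ)
    (hg_def : ∀ x ∈ Ioo (0:ℝ) 1, g x = ∫ y in Ioi (yth x), V y * fY y)
    (hg0 : g 0 = 0)
    (hg1 : g 1 = ∫ y in Ioi (0:ℝ), V y * fY y) :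
    StrictConcaveOn ℝ (Icc 0 1) g ∧
      (∀ x ∈ Ioo (0:ℝ) 1, HasDerivAt g (V (yth x)) x) ∧
      Tendsto (deriv g) (𝓝[>] (0:ℝ)) atTop ∧
      Tendsto (deriv g) (𝓝[<] (1:ℝ)) (𝓝 0) := by
  set F : ℝ → ℝ := fun t => ∫ y in Ioi t, fY y with hF_def
  set G : ℝ → ℝ := fun t => ∫ y in Ioi t, V y * fY y with hG_def
  -- basic facts
  have hVf_cont : ContinuousOn (fun y => V y * fY y) (Ioi 0) :=
    (hV_cont.mono Ioi_subset_Ici_self).mul hfY_cont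
  have hVf_pos : ∀ y ∈ Ioi (0:ℝ), 0 < V y * fY y := by
    intro y hy
    have : V 0 < V y := hV_mono self_mem_Ici (mem_Ici.2 (le_of_lt hy)) hy
    exact mul_pos (by linarith [hV0 ▸ this]) (hfY_pos y hy)
  have hF_anti : StrictAntiOn F (Ici 0) := tail_strictAnti fY hfY_cont hfY_int hfY_pos
  have hF_pos : ∀ t : ℝ, 0 ≤ t → 0 < F t := fun t ht =>
    tail_pos fY hfY_cont hfY_int hfY_pos ht
  have hF0 : F 0 = 1 := hfY_one
  have hF_lt_one : ∀ t : ℝ, 0 < t → F t < 1 := by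
    intro t ht
    have := hF_anti self_mem_Ici (le_of_lt ht) ht
    rwa [hF0] at this
  have hyth_pos : ∀ x ∈ Ioo (0:ℝ) 1, 0 < yth x := fun x hx => (hyth x hx).1
  have hyth_eq : ∀ x ∈ Ioo (0:ℝ) 1, F (yth x) = x := fun x hx => (hyth x hx).2
  -- strict antitonicity of yth
  have hyth_anti : ∀ x ∈ Ioo (0:ℝ) 1, ∀ x' ∈ Ioo (0:ℝ) 1, x < x' → yth x' < yth x := by
    intro x hx x' hx' hlt
    by_contra hcon
    push_neg at hcon
    have : F (yth x') ≤ F (yth x) := by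
      rcases eq_or_lt_of_le hcon with h | h
      · rw [h]
      · exact (hF_anti (le_of_lt (hyth_pos x hx)) (le_of_lt (hyth_pos x' hx')) h).le
    rw [hyth_eq x hx, hyth_eq x' hx'] at this
    linarith
  -- continuity of yth
  have hyth_cont : ∀ x₀ ∈ Ioo (0:ℝ) 1, ContinuousAt yth x₀ := by
    intro x₀ hx₀
    have ht₀ : 0 < yth x₀ := hyth_pos x₀ hx₀
    rw [ContinuousAt, Metric.tendsto_nhds]
    intro ε hε
    set t₀ := yth x₀
    set ε' := min (ε / 2) (t₀ / 2) with hε'_def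
    have hε'_pos : 0 < ε' := lt_min (by linarith) (by linarith)
    have hε'_lt : ε' < t₀ := lt_of_le_of_lt (min_le_right _ _) (by linarith)
    have hsub : 0 < t₀ - ε' := by linarith
    have h1 : F (t₀ + ε') < x₀ := by
      rw [← hyth_eq x₀ hx₀]
      exact hF_anti (mem_Ici.2 (le_of_lt ht₀)) (mem_Ici.2 (by linarith)) (by linarith)
    have h2 : x₀ < F (t₀ - ε') := by
      rw [← hyth_eq x₀ hx₀]
      exact hF_anti (mem_Ici.2 (le_of_lt hsub)) (mem_Ici.2 (le_of_lt ht₀)) (by linarith)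
    filter_upwards [Ioo_mem_nhds h1 h2] with x hx
    have hxIoo : x ∈ Ioo (0:ℝ) 1 :=
      ⟨lt_trans (hF_pos _ (by linarith)) hx.1, lt_trans hx.2 (hF_lt_one _ hsub)⟩
    have hxpos : 0 < yth x := hyth_pos x hxIoo
    have hgt : t₀ - ε' < yth x := by
      by_contra hcon
      push_neg at hcon
      have : F (t₀ - ε') ≤ F (yth x) := by
        rcases eq_or_lt_of_le hcon with h | h
        · rw [h]
        · exact (hF_anti (le_of_lt hxpos) (le_of_lt hsub) h).le
      rw [hyth_eq x hxIoo] at this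
      linarith [hx.2]
    have hlt2 : yth x < t₀ + ε' := by
      by_contra hcon
      push_neg at hcon
      have : F (yth x) ≤ F (t₀ + ε') := by
        rcases eq_or_lt_of_le hcon with h | h
        · rw [← h]
        · exact (hF_anti (by linarith : (0:ℝ) ≤ t₀ + ε') (le_of_lt hxpos) h).le
      rw [hyth_eq x hxIoo] at this
      linarith [hx.1]
    rw [Real.dist_eq, abs_sub_lt_iff]
    have hε'le : ε' ≤ ε / 2 := min_le_left _ _
    constructor <;> linarith
  -- derivative of g
  have hg_deriv : ∀ x ∈ Ioo (0:ℝ) 1, HasDerivAt g (V (yth x)) x := by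
    intro x₀ hx₀
    have ht₀ : 0 < yth x₀ := hyth_pos x₀ hx₀
    have hf_pos : 0 < fY (yth x₀) := hfY_pos _ ht₀
    have hF_deriv : HasDerivAt F (-(fY (yth x₀))) (yth x₀) :=
      tail_hasDerivAt fY hfY_cont hfY_int ht₀
    have hyth_deriv : HasDerivAt yth (-(fY (yth x₀)))⁻¹ x₀ := by
      refine hF_deriv.of_local_left_inverse (hyth_cont x₀ hx₀) (by simp [hf_pos.ne']) ?_
      filter_upwards [Ioo_mem_nhds hx₀.1 hx₀.2] with x hx using hyth_eq x hx
    have hG_deriv : HasDerivAt G (-(V (yth x₀) * fY (yth x₀))) (yth x₀) :=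
      tail_hasDerivAt _ hVf_cont hVf_int ht₀
    have hcomp : HasDerivAt (G ∘ yth) ((-(V (yth x₀) * fY (yth x₀))) * (-(fY (yth x₀)))⁻¹) x₀ :=
      hG_deriv.comp x₀ hyth_deriv
    have heq : (-(V (yth x₀) * fY (yth x₀))) * (-(fY (yth x₀)))⁻¹ = V (yth x₀) := by
      field_simp
    rw [heq] at hcomp
    apply hcomp.congr_of_eventuallyEq
    filter_upwards [Ioo_mem_nhds hx₀.1 hx₀.2] with x hx using hg_def x hx
  have hderiv_eq : ∀ x ∈ Ioo (0:ℝ) 1, deriv g x = V (yth x) := fun x hx =>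
    (hg_deriv x hx).deriv
  -- yth tends to infinity at 0⁺
  have hyth_top : Tendsto yth (𝓝[>] (0:ℝ)) atTop := by
    rw [tendsto_atTop]
    intro M
    set M' := max M 1 with hM'_def
    have hM' : 0 < M' := lt_of_lt_of_le one_pos (le_max_right _ _)
    have hFM' : 0 < F M' := hF_pos _ hM'.le
    have hFM'1 : F M' < 1 := hF_lt_one _ hM'
    filter_upwards [Ioo_mem_nhdsGT_of_mem ⟨le_refl (0:ℝ), hFM'⟩] with x hx
    have hxIoo : x ∈ Ioo (0:ℝ) 1 := ⟨hx.1, lt_trans hx.2 hFM'1⟩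
    have : M' < yth x := by
      by_contra hcon
      push_neg at hcon
      have : F M' ≤ F (yth x) := by
        rcases eq_or_lt_of_le hcon with h | h
        · rw [h]
        · exact (hF_anti (mem_Ici.2 (hyth_pos x hxIoo).le) (mem_Ici.2 hM'.le) h).le
      rw [hyth_eq x hxIoo] at this
      linarith [hx.2]
    linarith [le_max_left M 1]
  -- yth tends to 0⁺ at 1⁻
  have hyth_zero : Tendsto yth (𝓝[<] (1:ℝ)) (𝓝[>] (0:ℝ)) := by
    rw [tendsto_nhdsWithin_iff]
    constructor
    · rw [Metric.tendsto_nhds]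
      intro ε hε
      set ε' := min (ε / 2) 1 with hε'_def
      have hε'_pos : 0 < ε' := lt_min (by linarith) one_pos
      have hFε' : F ε' < 1 := hF_lt_one _ hε'_pos
      have hFε'_pos : 0 < F ε' := hF_pos _ hε'_pos.le
      filter_upwards [Ioo_mem_nhdsLT_of_mem ⟨hFε', le_refl (1:ℝ)⟩] with x hx
      have hxIoo : x ∈ Ioo (0:ℝ) 1 := ⟨lt_trans hFε'_pos hx.1, hx.2⟩
      have hlt : yth x < ε' := by
        by_contra hcon
        push_neg at hcon
        have : F (yth x) ≤ F ε' := by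
          rcases eq_or_lt_of_le hcon with h | h
          · rw [h]
          · exact (hF_anti (mem_Ici.2 hε'_pos.le) (mem_Ici.2 (hyth_pos x hxIoo).le) h).le
        rw [hyth_eq x hxIoo] at this
        linarith [hx.1]
      have := hyth_pos x hxIoo
      rw [Real.dist_eq, abs_sub_lt_iff]
      have : ε' ≤ ε / 2 := min_le_left _ _
      constructor <;> linarith [hyth_pos x hxIoo]
    · filter_upwards [Ioo_mem_nhdsLT_of_mem ⟨(by norm_num : (0:ℝ) < 1), le_refl (1:ℝ)⟩]
        with x hx using hyth_pos x hx
  -- G tends to 0 at infinity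
  have hG_top : Tendsto G atTop (𝓝 0) := by
    have h1 : Tendsto (fun t => ∫ y in (1:ℝ)..t, V y * fY y) atTop
        (𝓝 (∫ y in Ioi (1:ℝ), V y * fY y)) :=
      intervalIntegral_tendsto_integral_Ioi 1
        (hVf_int.mono_set (Ioi_subset_Ioi one_pos.le)) tendsto_id
    have h2 : Tendsto (fun t => G 1 - ∫ y in (1:ℝ)..t, V y * fY y) atTop
        (𝓝 (G 1 - ∫ y in Ioi (1:ℝ), V y * fY y)) := h1.const_sub _
    have h3 : G 1 - ∫ y in Ioi (1:ℝ), V y * fY y = 0 := sub_self _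
    rw [h3] at h2
    apply h2.congr'
    filter_upwards [eventually_ge_atTop (1:ℝ)] with t ht
    simp only [hG_def]
    rw [intervalIntegral.integral_of_le ht, tail_split _ hVf_int one_pos.le ht]
    ring
  -- G is right-continuous at 0
  have hG_right : Tendsto G (𝓝[>] (0:ℝ)) (𝓝 (g 1)) := by
    have key : Tendsto (fun t => ∫ y in Ioc (0:ℝ) t, V y * fY y) (𝓝[>] (0:ℝ)) (𝓝 0) := by
      have hdc : Tendsto
          (fun t => ∫ y in Ioi (0:ℝ), (Ioc (0:ℝ) t).indicator (fun y => V y * fY y) y)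
          (𝓝[>] (0:ℝ)) (𝓝 (∫ y in Ioi (0:ℝ), (0:ℝ))) := by
        apply tendsto_integral_filter_of_dominated_convergence
          (fun y => ‖V y * fY y‖)
        · filter_upwards with t
          exact (hVf_int.aestronglyMeasurable).indicator measurableSet_Ioc
        · filter_upwards with t
          filter_upwards with y
          exact norm_indicator_le_norm_self _ _
        · exact hVf_int.norm
        · rw [ae_restrict_iff' measurableSet_Ioi]
          filter_upwards with y hy
          apply tendsto_const_nhds.congr'
          filter_upwards [Ioo_mem_nhdsGT_of_mem ⟨le_refl (0:ℝ), hy⟩] with t ht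
          exact (indicator_of_notMem (fun h => absurd h.2 (not_le.2 ht.2)) _).symm
      simp only [integral_zero] at hdc
      apply hdc.congr'
      filter_upwards with t
      rw [integral_indicator measurableSet_Ioc, Measure.restrict_restrict measurableSet_Ioc,
        inter_eq_left.2 (fun y hy => hy.1)]
    have h2 : Tendsto (fun t => g 1 - ∫ y in Ioc (0:ℝ) t, V y * fY y) (𝓝[>] (0:ℝ))
        (𝓝 (g 1 - 0)) := key.const_sub _
    rw [sub_zero] at h2
    apply h2.congr'
    filter_upwards [self_mem_nhdsWithin] with t ht
    simp only [hG_def]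
    rw [hg1, tail_split _ hVf_int (le_refl 0) (le_of_lt ht)]
    ring
  -- g limits at the endpoints
  have hg_right : Tendsto g (𝓝[>] (0:ℝ)) (𝓝 0) := by
    apply (hG_top.comp hyth_top).congr'
    filter_upwards [Ioo_mem_nhdsGT_of_mem ⟨le_refl (0:ℝ), one_pos⟩] with x hx
    exact (hg_def x hx).symm
  have hg_left : Tendsto g (𝓝[<] (1:ℝ)) (𝓝 (g 1)) := by
    apply (hG_right.comp hyth_zero).congr'
    filter_upwards [Ioo_mem_nhdsLT_of_mem ⟨one_pos, le_refl (1:ℝ)⟩] with x hx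
    exact (hg_def x hx).symm
  -- continuity of g on [0,1]
  have hg_cont : ContinuousOn g (Icc 0 1) := by
    intro x hx
    rcases eq_or_lt_of_le hx.1 with h0 | h0
    · subst h0
      apply ContinuousWithinAt.mono _ Icc_subset_Ici_self
      rw [ContinuousWithinAt, ← Ioi_union_left, nhdsWithin_union, nhdsWithin_singleton,
        tendsto_sup]
      refine ⟨by rw [hg0]; exact hg_right, ?_⟩
      exact (tendsto_pure_pure g 0).mono_right (pure_le_nhds _)
    · rcases eq_or_lt_of_le hx.2 with h1 | h1
      · subst h1
        apply ContinuousWithinAt.mono _ Icc_subset_Iic_self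
        rw [ContinuousWithinAt, ← Iio_union_right, nhdsWithin_union, nhdsWithin_singleton,
          tendsto_sup]
        exact ⟨hg_left, (tendsto_pure_pure g 1).mono_right (pure_le_nhds _)⟩
      · exact ((hg_deriv x ⟨h0, h1⟩).continuousAt).continuousWithinAt
  -- strict antitonicity of deriv g
  have hanti : StrictAntiOn (deriv g) (interior (Icc (0:ℝ) 1)) := by
    rw [interior_Icc]
    intro x hx y hy hxy
    rw [hderiv_eq x hx, hderiv_eq y hy]
    exact hV_mono (mem_Ici.2 (hyth_pos y hy).le) (mem_Ici.2 (hyth_pos x hx).le)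
      (hyth_anti x hx y hy hxy)
  refine ⟨StrictAntiOn.strictConcaveOn_of_deriv (convex_Icc 0 1) hg_cont hanti, hg_deriv, ?_, ?_⟩
  · apply (hV_top.comp hyth_top).congr'
    filter_upwards [Ioo_mem_nhdsGT_of_mem ⟨le_refl (0:ℝ), one_pos⟩] with x hx
    exact (hderiv_eq x hx).symm
  · have hV_at0 : Tendsto V (𝓝[Ici 0] (0:ℝ)) (𝓝 0) := by
      have := hV_cont 0 self_mem_Ici
      rwa [ContinuousWithinAt, hV0] at this
    have h := hV_at0.comp (hyth_zero.mono_right (nhdsWithin_mono _ Ioi_subset_Ici_self))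
    apply h.congr'
    filter_upwards [Ioo_mem_nhdsLT_of_mem ⟨one_pos, le_refl (1:ℝ)⟩] with x hx
    exact (hderiv_eq x hx).symm
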